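/- Fix 0 < ρ_L ≤ ρ_U and c > 0, and define g₁(μ) = erf((ρ_U + μ)/c) − erf((ρ_L + μ)/c). Then for all μ with −ρ_U ≤ μ ≤ ρ_U, g₁(μ) ≥ g₁(ρ_U) = erf(2ρ_U/c) − erf((ρ_L + ρ_U)/c). -/

import Mathlib

noncomputable def erf (x : ℝ) : ℝ :=
  (2 / Real.sqrt Real.pi) * ∫ t in (0 : ℝ)..x, Real.exp (-t ^ 2)

noncomputable def g1 (ρL ρU c μ : ℝ) : ℝ := erf ((ρU + μ) / c) - erf ((ρL + μ) / c)

lemma contE : Continuous fun t : ℝ => Real.exp (-t ^ 2) := by continuity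

lemma intE (u v : ℝ) :
    IntervalIntegrable (fun t : ℝ => Real.exp (-t ^ 2)) MeasureTheory.volume u v :=
  contE.intervalIntegrable u v

lemma erf_sub (x y : ℝ) :
    erf x - erf y = (2 / Real.sqrt Real.pi) * ∫ t in y..x, Real.exp (-t ^ 2) := by
  unfold erf
  rw [← mul_sub]
  have h := intervalIntegral.integral_add_adjacent_intervals (intE 0 y) (intE y x)
  congr 1
  linarith

lemma key (a b L : ℝ) (hL : 0 ≤ L) (hab : a ≤ b) (ha : -(L / 2) ≤ a) :
    (∫ t in b..(b + L), Real.exp (-t ^ 2)) ≤ ∫ t in a..(a + L), Real.exp (-t ^ 2) := by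
  have h2 : (∫ t in a..b, Real.exp (-(t + L) ^ 2))
      = ∫ t in (a + L)..(b + L), Real.exp (-t ^ 2) := by
    simpa using intervalIntegral.integral_comp_add_right (fun t => Real.exp (-t ^ 2)) L
  have e1 := intervalIntegral.integral_add_adjacent_intervals (intE a (a + L)) (intE (a + L) (b + L))
  have e2 := intervalIntegral.integral_add_adjacent_intervals (intE a b) (intE b (b + L))
  have hnn : 0 ≤ ∫ t in a..b, (Real.exp (-t ^ 2) - Real.exp (-(t + L) ^ 2)) := by
    apply intervalIntegral.integral_nonneg hab
    intro t ht
    have ht1 : -(L / 2) ≤ t := le_trans ha ht.1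
    have : -(t + L) ^ 2 ≤ -t ^ 2 := by nlinarith
    have := Real.exp_le_exp.2 this
    linarith
  rw [intervalIntegral.integral_sub (intE a b)
    ((Continuous.intervalIntegrable (by continuity) a b : IntervalIntegrable
      (fun t : ℝ => Real.exp (-(t + L) ^ 2)) MeasureTheory.volume a b)), h2] at hnn
  linarith

theorem stmt7 (ρL ρU c : ℝ) (hL : 0 < ρL) (hLU : ρL ≤ ρU) (hc : 0 < c) :
    (∀ μ : ℝ, -ρU ≤ μ → μ ≤ ρU → g1 ρL ρU c ρU ≤ g1 ρL ρU c μ) ∧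
    g1 ρL ρU c ρU = erf (2 * ρU / c) - erf ((ρL + ρU) / c) := by
  constructor
  · intro μ h1 h2
    set L : ℝ := (ρU - ρL) / c with hLdef
    set a : ℝ := (ρL + μ) / c with hadef
    set A : ℝ := (ρL + ρU) / c with hAdef
    have hLnn : 0 ≤ L := div_nonneg (by linarith) hc.le
    have huμ : (ρU + μ) / c = a + L := by
      rw [hadef, hLdef, ← add_div]; congr 1; ring
    have huU : (ρU + ρU) / c = A + L := by
      rw [hAdef, hLdef, ← add_div]; congr 1; ring
    have hgμ : g1 ρL ρU c μ = (2 / Real.sqrt Real.pi) * ∫ t in a..(a + L), Real.exp (-t ^ 2) := by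
      rw [g1, huμ, erf_sub]
    have hgU : g1 ρL ρU c ρU = (2 / Real.sqrt Real.pi) * ∫ t in A..(A + L), Real.exp (-t ^ 2) := by
      rw [g1, huU, erf_sub]
    rw [hgμ, hgU]
    have haA : a ≤ A := by
      rw [hadef, hAdef]; gcongr
    have haL : -L ≤ a := by
      have : (0 : ℝ) ≤ a + L := by
        rw [← huμ]; exact div_nonneg (by linarith) hc.le
      linarith
    have hAnn : 0 ≤ A := by
      rw [hAdef]; exact div_nonneg (by linarith) hc.le
    have hkey : (∫ t in A..(A + L), Real.exp (-t ^ 2)) ≤ ∫ t in a..(a + L), Real.exp (-t ^ 2) := by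
      rcases le_or_gt (-(L / 2)) a with hca | hca
      · exact key a A L hLnn haA hca
      · have hrefl : (∫ t in a..(a + L), Real.exp (-t ^ 2))
            = ∫ t in (-L - a)..((-L - a) + L), Real.exp (-t ^ 2) := by
          have := intervalIntegral.integral_comp_neg (a := -(a+L)) (b := -a)
            (fun t : ℝ => Real.exp (-t ^ 2))
          simp only [neg_neg] at this
          rw [show -L - a = -(a + L) by ring, show -(a + L) + L = -a by ring]
          rw [← this]
          apply intervalIntegral.integral_congr
          intro t _
          ring_nf
        rw [hrefl]
        exact key (-L - a) A L hLnn (by linarith) (by linarith)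
    apply mul_le_mul_of_nonneg_left hkey
    positivity
  · rw [g1, show ρU + ρU = 2 * ρU by ring]
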